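/- Consider the economy with two goods (3/2 units each), five agents in families {h,w}, {h',w'}, {s}, where u_h(y,z) = u_{h'}(y,z) = u_s(y,z) = y + z, u_w(y,z) = y^{1/4}z^{3/4}, u_{w'}(y,z) = y^{3/4}z^{1/4}. Then no allocation is simultaneously Pareto-optimal, individual-fair-share, and family-egalitarian-equivalent. In particular: individual-FS forces y_f + z_f = y_{f'} + z_{f'} = y_s + z_s = 1 for any Pareto-optimal individual-FS allocation, the unique such Pareto optimum gives f the bundle (1/4, 3/4) and f' the bundle (3/4, 1/4), and no reference bundle r with y_r + z_r = 1 makes both wives indifferent-or-conflicted with their family's bundle. -/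
import Mathlib


/-- Cobb-Douglas utility with coefficient `a`. -/
noncomputable def cd (a : ℝ) (x : Fin 2 → ℝ) : ℝ := x 0 ^ a * x 1 ^ (1 - a)

lemma core_lt {a : ℝ} (h0 : 0 ≤ a) (h1 : a ≤ 1) (hne : a ≠ 1/4) :
    a ^ (1/4:ℝ) * (1-a) ^ (3/4:ℝ) < (1/4:ℝ) ^ (1/4:ℝ) * (3/4:ℝ) ^ (3/4:ℝ) := by
  have h1' : 0 ≤ 1 - a := by linarith
  have e1 : (a ^ (1/4:ℝ))^(4:ℕ) = a := by
    rw [← Real.rpow_natCast (a ^ (1/4:ℝ)) 4, ← Real.rpow_mul h0]; norm_num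
  have e2 : ((1-a) ^ (3/4:ℝ))^(4:ℕ) = (1-a)^(3:ℕ) := by
    rw [← Real.rpow_natCast ((1-a) ^ (3/4:ℝ)) 4, ← Real.rpow_mul h1',
      ← Real.rpow_natCast (1-a) 3]; norm_num
  have e3 : ((1/4:ℝ) ^ (1/4:ℝ))^(4:ℕ) = 1/4 := by
    rw [← Real.rpow_natCast ((1/4:ℝ) ^ (1/4:ℝ)) 4, ← Real.rpow_mul (by norm_num)]; norm_num
  have e4 : ((3/4:ℝ) ^ (3/4:ℝ))^(4:ℕ) = (3/4:ℝ)^(3:ℕ) := by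
    rw [← Real.rpow_natCast ((3/4:ℝ) ^ (3/4:ℝ)) 4, ← Real.rpow_mul (by norm_num),
      ← Real.rpow_natCast (3/4:ℝ) 3]; norm_num
  have hsq : 0 < (a - 1/4)^2 := by
    have : a - 1/4 ≠ 0 := sub_ne_zero.mpr hne
    positivity
  have hpoly : a * (1-a)^(3:ℕ) < (1/4:ℝ) * (3/4:ℝ)^(3:ℕ) := by
    nlinarith [sq_nonneg (a - 5/4), hsq]
  refine lt_of_pow_lt_pow_left₀ 4 (by positivity) ?_
  rw [mul_pow, mul_pow, e1, e2, e3, e4]; exact hpoly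

lemma cd14_val : cd (1/4) ![(1:ℝ)/4, 3/4] = (1/4:ℝ) ^ (1/4:ℝ) * (3/4:ℝ) ^ (3/4:ℝ) := by
  simp [cd]; norm_num

lemma cd34_val : cd (3/4) ![(3:ℝ)/4, 1/4] = (1/4:ℝ) ^ (1/4:ℝ) * (3/4:ℝ) ^ (3/4:ℝ) := by
  simp [cd]; norm_num [mul_comm]

lemma cd14_expand {r : Fin 2 → ℝ} (hs : r 0 + r 1 = 1) :
    cd (1/4) r = r 0 ^ (1/4:ℝ) * (1 - r 0) ^ (3/4:ℝ) := by
  have : r 1 = 1 - r 0 := by linarith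
  simp [cd, this]; norm_num

lemma cd34_expand {r : Fin 2 → ℝ} (hs : r 0 + r 1 = 1) :
    cd (3/4) r = r 1 ^ (1/4:ℝ) * (1 - r 1) ^ (3/4:ℝ) := by
  have : r 0 = 1 - r 1 := by linarith
  simp [cd, this]; norm_num [mul_comm]

lemma cd14_lt {r : Fin 2 → ℝ} (h0 : 0 ≤ r 0) (h1 : 0 ≤ r 1) (hs : r 0 + r 1 = 1)
    (hne : r 0 ≠ 1/4) : cd (1/4) r < cd (1/4) ![(1:ℝ)/4, 3/4] := by
  rw [cd14_val, cd14_expand hs]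
  exact core_lt h0 (by linarith) hne

lemma cd34_lt {r : Fin 2 → ℝ} (h0 : 0 ≤ r 0) (h1 : 0 ≤ r 1) (hs : r 0 + r 1 = 1)
    (hne : r 0 ≠ 3/4) : cd (3/4) r < cd (3/4) ![(3:ℝ)/4, 1/4] := by
  rw [cd34_val, cd34_expand hs]
  exact core_lt h1 (by linarith) (fun h => hne (by linarith))

lemma cd14_le {r : Fin 2 → ℝ} (h0 : 0 ≤ r 0) (h1 : 0 ≤ r 1) (hs : r 0 + r 1 = 1) :
    cd (1/4) r ≤ cd (1/4) ![(1:ℝ)/4, 3/4] := by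
  by_cases h : r 0 = 1/4
  · rw [cd14_val, cd14_expand hs, h]; norm_num
  · exact (cd14_lt h0 h1 hs h).le

lemma cd34_le {r : Fin 2 → ℝ} (h0 : 0 ≤ r 0) (h1 : 0 ≤ r 1) (hs : r 0 + r 1 = 1) :
    cd (3/4) r ≤ cd (3/4) ![(3:ℝ)/4, 1/4] := by
  by_cases h : r 0 = 3/4
  · rw [cd34_val, cd34_expand hs, show r 1 = 1/4 by linarith]; norm_num
  · exact (cd34_lt h0 h1 hs h).le

lemma vec2_ext {v : Fin 2 → ℝ} {p q : ℝ} (h0 : v 0 = p) (h1 : v 1 = q) : v = ![p, q] := by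
  funext i; fin_cases i
  · exact h0
  · exact h1

noncomputable def Uaux : Fin 5 → (Fin 2 → ℝ) → ℝ :=
  ![fun b => b 0 + b 1, cd (1/4), fun b => b 0 + b 1, cd (3/4), fun b => b 0 + b 1]

def Famaux : Fin 5 → Fin 3 := ![0, 0, 1, 1, 2]

lemma conflict_elim {f : Fin 3} {b r : Fin 2 → ℝ} (hb : b 0 + b 1 = 1) (hr : r 0 + r 1 = 1)
    (h : ∃ i j : Fin 5, Famaux i = f ∧ Famaux j = f ∧ Uaux i b > Uaux i r ∧ Uaux j b < Uaux j r) :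
    False := by
  obtain ⟨i, j, hi, hj, hgt, hlt⟩ := h
  fin_cases i <;> fin_cases j <;>
    simp_all [Uaux, Famaux] <;> first | linarith | (subst hi; exact absurd hj (by decide))

lemma conflict_elim2 {b r : Fin 2 → ℝ}
    (h : ∃ i j : Fin 5, Famaux i = 2 ∧ Famaux j = 2 ∧ Uaux i b > Uaux i r ∧ Uaux j b < Uaux j r) :
    False := by
  obtain ⟨i, j, hi, hj, hgt, hlt⟩ := h
  fin_cases i <;> fin_cases j <;> simp_all [Uaux, Famaux] <;> linarith

/-- The economy with e = (3/2, 3/2), agents 0=h, 1=w, 2=h', 3=w', 4=s in families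
{h,w}, {h',w'}, {s}, where h, h', s have linear utility y + z and the wives have
Cobb-Douglas utilities with coefficients 1/4 and 3/4, has no allocation that is
simultaneously Pareto-optimal, individual-fair-share, and family-egalitarian-
equivalent; moreover every individual-FS Pareto optimum gives every family a
bundle summing to 1, with family bundles (1/4, 3/4) and (3/4, 1/4), and no
reference bundle on the line y + z = 1 works for both wives. -/
theorem stmt_17 :
    let e : Fin 2 → ℝ := ![3/2, 3/2]
    let ebar : Fin 2 → ℝ := ![1/2, 1/2]
    let u : Fin 5 → (Fin 2 → ℝ) → ℝ :=
      ![fun b => b 0 + b 1, cd (1/4), fun b => b 0 + b 1, cd (3/4), fun b => b 0 + b 1]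
    let fam : Fin 5 → Fin 3 := ![0, 0, 1, 1, 2]
    let Feasible : (Fin 3 → Fin 2 → ℝ) → Prop := fun x =>
      (∀ f g, 0 ≤ x f g) ∧ ∀ g, ∑ f, x f g ≤ e g
    let FS : (Fin 3 → Fin 2 → ℝ) → Prop := fun x => ∀ i, u i (x (fam i)) ≥ u i ebar
    let PO : (Fin 3 → Fin 2 → ℝ) → Prop := fun x => ¬ ∃ y, Feasible y ∧
      (∀ i, u i (y (fam i)) ≥ u i (x (fam i))) ∧
      ∃ j, u j (y (fam j)) > u j (x (fam j))
    let EEcond : Fin 3 → (Fin 2 → ℝ) → (Fin 2 → ℝ) → Prop := fun f b r =>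
      (∀ i, fam i = f → u i b = u i r) ∨
      (∃ i j, fam i = f ∧ fam j = f ∧ u i b > u i r ∧ u j b < u j r)
    let FamEE : (Fin 3 → Fin 2 → ℝ) → Prop := fun x =>
      ∃ r : Fin 2 → ℝ, (∀ g, 0 ≤ r g) ∧ ∀ f, EEcond f (x f) r
    (¬ ∃ x, Feasible x ∧ FS x ∧ PO x ∧ FamEE x) ∧
    (∀ x, Feasible x → FS x → PO x → ∀ f, x f 0 + x f 1 = 1) ∧
    (∀ x, Feasible x → FS x → PO x → x 0 = ![1/4, 3/4] ∧ x 1 = ![3/4, 1/4]) ∧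
    (∀ r : Fin 2 → ℝ, (∀ g, 0 ≤ r g) → r 0 + r 1 = 1 →
      ¬ (EEcond 0 ![1/4, 3/4] r ∧ EEcond 1 ![3/4, 1/4] r)) := by
  intro e ebar u fam Feasible FS PO EEcond FamEE
  -- Part 2 : every Feasible + FS allocation has family sums 1
  have part2 : ∀ x, Feasible x → FS x → ∀ f : Fin 3, x f 0 + x f 1 = 1 := by
    intro x hFeas hFS f
    obtain ⟨hpos, hsum⟩ := hFeas
    have h0 := hFS 0
    have h2 := hFS 2
    have h4 := hFS 4
    simp only [u, fam, ebar, Matrix.cons_val_zero, Matrix.cons_val_one, Matrix.head_cons,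
      Matrix.cons_val_two, Matrix.cons_val_three, Matrix.cons_val_four, Matrix.tail_cons,
      Matrix.head_fin_const] at h0 h2 h4
    have hs0 := hsum 0
    have hs1 := hsum 1
    simp only [e, Fin.sum_univ_three, Matrix.cons_val_zero, Matrix.cons_val_one,
      Matrix.head_cons] at hs0 hs1
    fin_cases f
    · show x 0 0 + x 0 1 = 1; linarith
    · show x 1 0 + x 1 1 = 1; linarith
    · show x 2 0 + x 2 1 = 1; linarith
  -- Part 3 : unique PO with FS
  have part3 : ∀ x, Feasible x → FS x → PO x →
      x 0 = ![1/4, 3/4] ∧ x 1 = ![3/4, 1/4] := by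
    intro x hF hFS hPO
    have hsum1 := part2 x hF hFS
    have hpos := hF.1
    have key : x 0 0 = 1/4 ∧ x 1 0 = 3/4 := by
      by_contra hk
      apply hPO
      refine ⟨![![1/4, 3/4], ![3/4, 1/4], ![1/2, 1/2]], ⟨?_, ?_⟩, ?_, ?_⟩
      · intro f g
        fin_cases f <;> fin_cases g <;> norm_num
      · intro g
        fin_cases g <;>
          simp [e, Fin.sum_univ_three] <;> norm_num
      · intro i
        fin_cases i
        · show (1:ℝ)/4 + 3/4 ≥ x 0 0 + x 0 1
          rw [hsum1 0]; norm_num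
        · show cd (1/4) ![1/4, 3/4] ≥ cd (1/4) (x 0)
          exact cd14_le (hpos 0 0) (hpos 0 1) (hsum1 0)
        · show (3:ℝ)/4 + 1/4 ≥ x 1 0 + x 1 1
          rw [hsum1 1]; norm_num
        · show cd (3/4) ![3/4, 1/4] ≥ cd (3/4) (x 1)
          exact cd34_le (hpos 1 0) (hpos 1 1) (hsum1 1)
        · show (1:ℝ)/2 + 1/2 ≥ x 2 0 + x 2 1
          rw [hsum1 2]; norm_num
      · rcases not_and_or.mp hk with h | h
        · exact ⟨1, cd14_lt (hpos 0 0) (hpos 0 1) (hsum1 0) h⟩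
        · exact ⟨3, cd34_lt (hpos 1 0) (hpos 1 1) (hsum1 1) h⟩
    refine ⟨vec2_ext key.1 ?_, vec2_ext key.2 ?_⟩
    · have := hsum1 0; linarith [key.1]
    · have := hsum1 1; linarith [key.2]
  -- Part 4 : no reference bundle works for both wives
  have part4 : ∀ r : Fin 2 → ℝ, (∀ g, 0 ≤ r g) → r 0 + r 1 = 1 →
      ¬ (EEcond 0 ![1/4, 3/4] r ∧ EEcond 1 ![3/4, 1/4] r) := by
    rintro r hr hrsum ⟨hA, hB⟩
    have hr0 : r 0 = 1/4 := by
      rcases hA with h | ⟨i, j, hi, hj, hgt, hlt⟩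
      · have h1 := h 1 rfl
        simp only [u, Matrix.cons_val_one, Matrix.head_cons] at h1
        by_contra hne
        exact absurd h1.symm (ne_of_lt (cd14_lt (hr 0) (hr 1) hrsum hne))
      · exact absurd (conflict_elim (by norm_num) hrsum ⟨i, j, hi, hj, hgt, hlt⟩) not_false
    have hr0' : r 0 = 3/4 := by
      rcases hB with h | ⟨i, j, hi, hj, hgt, hlt⟩
      · have h3 := h 3 rfl
        simp only [u, Matrix.cons_val_three, Matrix.head_cons, Matrix.tail_cons] at h3
        by_contra hne
        exact absurd h3.symm (ne_of_lt (cd34_lt (hr 0) (hr 1) hrsum hne))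
      · exact absurd (conflict_elim (by norm_num) hrsum ⟨i, j, hi, hj, hgt, hlt⟩) not_false
    linarith
  refine ⟨?_, fun x hF hFS _ => part2 x hF hFS, part3, part4⟩
  -- Part 1
  rintro ⟨x, hF, hFS, hPO, r, hrpos, hEE⟩
  obtain ⟨hx0, hx1⟩ := part3 x hF hFS hPO
  have hx2 : x 2 0 + x 2 1 = 1 := part2 x hF hFS 2
  have hrsum : r 0 + r 1 = 1 := by
    rcases hEE 2 with h | ⟨i, j, hi, hj, hgt, hlt⟩
    · have h4 := h 4 rfl
      simp only [u, Matrix.cons_val_four, Matrix.head_cons, Matrix.tail_cons,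
        Matrix.head_fin_const] at h4
      linarith
    · exact absurd (conflict_elim2 ⟨i, j, hi, hj, hgt, hlt⟩) not_false
  have hE0 := hEE 0
  have hE1 := hEE 1
  rw [hx0] at hE0
  rw [hx1] at hE1
  exact part4 r hrpos hrsum ⟨hE0, hE1⟩
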